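/- Let G be a Hausdorff topological group. If there exists θ ∈ (0,1) such that for every finite subset E ⊆ G and every identity neighborhood U there is a finite nonempty F ⊆ G with μ(F, gF, U) ≥ θ|F| for all g ∈ E, then G is amenable. -/

import Mathlib

/-- Bounded right-uniformly continuous real functions on a topological group. -/
def RUCb (G : Type*) [Group G] [TopologicalSpace G] : Set (G → ℝ) :=
  {f | (∃ C, ∀ x, |f x| ≤ C) ∧
    ∀ ε > (0:ℝ), ∃ U ∈ nhds (1 : G), ∀ x y : G, x * y⁻¹ ∈ U → |f x - f y| ≤ ε}

/-- A mean on a set `D` of real functions on `X`: positive, normalized, linear on `D`. -/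
def IsMeanOn (X : Type*) (D : Set (X → ℝ)) (m : (X → ℝ) → ℝ) : Prop :=
  m (fun _ => 1) = 1 ∧
  (∀ f ∈ D, ∀ g ∈ D, m (f + g) = m f + m g) ∧
  (∀ (c : ℝ), ∀ f ∈ D, m (c • f) = c * m f) ∧
  (∀ f ∈ D, (∀ x, 0 ≤ f x) → 0 ≤ m f)

/-- A topological group is amenable if `RUC_b(G)` admits a left-invariant mean. -/
def TopAmenable (G : Type*) [Group G] [TopologicalSpace G] : Prop :=
  ∃ m : (G → ℝ) → ℝ, IsMeanOn G (RUCb G) m ∧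
    ∀ f ∈ RUCb G, ∀ g : G, m (fun x => f (g * x)) = m f

/-- The matching number `μ(A, B, U)`: the maximal size of a subset `D ⊆ A` admitting an
injection `φ : D → B` with `φ(x) ∈ Ux` (i.e. `φ(x)x⁻¹ ∈ U`) for all `x ∈ D`. -/
noncomputable def matchNum {G : Type*} [Group G] (A B : Finset G) (U : Set G) : ℕ :=
  sSup {n : ℕ | ∃ D : Finset G, D ⊆ A ∧ D.card = n ∧
    ∃ φ : G → G, Set.InjOn φ ↑D ∧ ∀ x ∈ D, φ x ∈ B ∧ φ x * x⁻¹ ∈ U}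

open Filter Finset
set_option linter.unusedSectionVars false
set_option maxHeartbeats 1000000

section Aux
variable {G : Type*} [Group G] [TopologicalSpace G]

/-- The directed set of identity neighborhoods (ordered by reverse inclusion). -/
def NbhdOne (G : Type*) [Group G] [TopologicalSpace G] : Type _ := {U : Set G // U ∈ nhds (1 : G)}

instance : Nonempty (NbhdOne G) := ⟨⟨Set.univ, Filter.univ_mem⟩⟩

instance : SemilatticeSup (NbhdOne G) where
  le U V := V.1 ⊆ U.1
  le_refl U := subset_rfl
  le_trans U V W h1 h2 := fun a ha => h1 (h2 ha)
  le_antisymm U V h1 h2 := Subtype.ext (subset_antisymm h2 h1)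
  sup U V := ⟨U.1 ∩ V.1, Filter.inter_mem U.2 V.2⟩
  le_sup_left U V := Set.inter_subset_left
  le_sup_right U V := Set.inter_subset_right
  sup_le U V W h1 h2 := Set.subset_inter h1 h2

/-- Iterated averages over a list of finite sets. -/
noncomputable def Mavg : List (Finset G) → (G → ℝ) → ℝ
  | [], f => f 1
  | F :: L, f => (∑ x ∈ F, Mavg L fun w => f (x * w)) / F.card

lemma Mavg_const (L : List (Finset G)) (hL : ∀ F ∈ L, F.Nonempty) (r : ℝ) :
    Mavg L (fun _ => r) = r := by
  induction L with
  | nil => rfl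
  | cons F L ih =>
    have hF : F.Nonempty := hL F (by simp)
    have h0 : (F.card : ℝ) ≠ 0 := by exact_mod_cast hF.card_pos.ne'
    simp only [Mavg]
    rw [ih (fun F' hF' => hL F' (by simp [hF'])), Finset.sum_const, nsmul_eq_mul]
    field_simp

lemma Mavg_add (L : List (Finset G)) (f f' : G → ℝ) :
    Mavg L (fun x => f x + f' x) = Mavg L f + Mavg L f' := by
  induction L generalizing f f' with
  | nil => rfl
  | cons F L ih =>
    simp only [Mavg]
    rw [← add_div]
    congr 1
    rw [← Finset.sum_add_distrib]
    exact Finset.sum_congr rfl fun x _ => ih _ _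

lemma Mavg_sub (L : List (Finset G)) (f f' : G → ℝ) :
    Mavg L (fun x => f x - f' x) = Mavg L f - Mavg L f' := by
  induction L generalizing f f' with
  | nil => rfl
  | cons F L ih =>
    simp only [Mavg]
    rw [← sub_div]
    congr 1
    rw [← Finset.sum_sub_distrib]
    exact Finset.sum_congr rfl fun x _ => ih _ _

lemma Mavg_smul (L : List (Finset G)) (c : ℝ) (f : G → ℝ) :
    Mavg L (fun x => c * f x) = c * Mavg L f := by
  induction L generalizing f with
  | nil => rfl
  | cons F L ih =>
    simp only [Mavg]
    rw [show c * ((∑ x ∈ F, Mavg L fun w => f (x * w)) / (F.card:ℝ))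
        = (c * ∑ x ∈ F, Mavg L fun w => f (x * w)) / (F.card:ℝ) from (mul_div_assoc _ _ _).symm,
      Finset.mul_sum]
    congr 1
    exact Finset.sum_congr rfl fun x _ => ih _

lemma Mavg_nonneg (L : List (Finset G)) (f : G → ℝ) (hf : ∀ x, 0 ≤ f x) :
    0 ≤ Mavg L f := by
  induction L generalizing f with
  | nil => exact hf 1
  | cons F L ih =>
    exact div_nonneg (Finset.sum_nonneg fun x _ => ih _ (fun w => hf _)) (Nat.cast_nonneg _)

lemma Mavg_abs_le (L : List (Finset G)) (f : G → ℝ) (C : ℝ) (hC : 0 ≤ C)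
    (hf : ∀ x, |f x| ≤ C) : |Mavg L f| ≤ C := by
  induction L generalizing f with
  | nil => exact hf 1
  | cons F L ih =>
    simp only [Mavg]
    rcases Nat.eq_zero_or_pos F.card with h0 | hpos
    · simp [h0, hC]
    · rw [abs_div, abs_of_nonneg (by positivity : (0:ℝ) ≤ (F.card:ℝ)),
        div_le_iff₀ (by exact_mod_cast hpos)]
      calc |∑ x ∈ F, Mavg L fun w => f (x*w)| ≤ ∑ x ∈ F, |Mavg L fun w => f (x*w)| :=
            Finset.abs_sum_le_sum_abs _ _
        _ ≤ ∑ x ∈ F, C := Finset.sum_le_sum fun x _ => ih _ (fun w => hf _)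
        _ = C * F.card := by rw [Finset.sum_const, nsmul_eq_mul]; ring

lemma Mavg_diff_abs_le (L : List (Finset G)) (f f' : G → ℝ) (ε : ℝ) (hε : 0 ≤ ε)
    (h : ∀ x, |f x - f' x| ≤ ε) : |Mavg L f - Mavg L f'| ≤ ε := by
  rw [← Mavg_sub L f f']
  exact Mavg_abs_le _ _ _ hε h

lemma matchNum_witness (A B : Finset G) (U : Set G) :
    ∃ D : Finset G, D ⊆ A ∧ D.card = matchNum A B U ∧
      ∃ φ : G → G, Set.InjOn φ ↑D ∧ ∀ x ∈ D, φ x ∈ B ∧ φ x * x⁻¹ ∈ U := by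
  have hne : {n : ℕ | ∃ D : Finset G, D ⊆ A ∧ D.card = n ∧
      ∃ φ : G → G, Set.InjOn φ ↑D ∧ ∀ x ∈ D, φ x ∈ B ∧ φ x * x⁻¹ ∈ U}.Nonempty := by
    refine ⟨0, ∅, Finset.empty_subset _, Finset.card_empty, id, ?_, ?_⟩
    · simp
    · simp
  have hbdd : BddAbove {n : ℕ | ∃ D : Finset G, D ⊆ A ∧ D.card = n ∧
      ∃ φ : G → G, Set.InjOn φ ↑D ∧ ∀ x ∈ D, φ x ∈ B ∧ φ x * x⁻¹ ∈ U} := by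
    refine ⟨A.card, ?_⟩
    rintro n ⟨D, hD, rfl, -⟩
    exact Finset.card_le_card hD
  have hmem := Nat.sSup_mem hne hbdd
  obtain ⟨D, hD, hcard, φ, hinj, hφ⟩ := hmem
  exact ⟨D, hD, by rw [hcard]; rfl, φ, hinj, hφ⟩

end Aux

section Key
variable {G : Type*} [Group G] [TopologicalSpace G] [DecidableEq G]
open scoped Pointwise

def conjSet (F E : Finset G) : Finset G := F⁻¹ * E * F

noncomputable def chain (sel : Finset G → NbhdOne G → Finset G)
    (shr : Finset G → NbhdOne G → NbhdOne G) : ℕ → Finset G → NbhdOne G → List (Finset G)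
  | 0, _, _ => []
  | k+1, E, U => sel E U :: chain sel shr k (conjSet (sel E U) E) (shr (sel E U) U)

lemma chain_nonempty (sel : Finset G → NbhdOne G → Finset G)
    (shr : Finset G → NbhdOne G → NbhdOne G) (hne : ∀ E U, (sel E U).Nonempty) :
    ∀ (k : ℕ) (E : Finset G) (U : NbhdOne G), ∀ F ∈ chain sel shr k E U, F.Nonempty := by
  intro k
  induction k with
  | zero => intro E U F hF; simp [chain] at hF
  | succ k ih =>
    intro E U F hF
    rcases List.mem_cons.1 hF with h | h
    · exact h ▸ hne E U
    · exact ih _ _ F h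

lemma key (θ : ℝ) (hθ0 : 0 < θ) (hθ1 : θ < 1)
    (sel : Finset G → NbhdOne G → Finset G) (shr : Finset G → NbhdOne G → NbhdOne G)
    (hsel : ∀ E U, (sel E U).Nonempty ∧ ∀ g ∈ E,
      θ * (sel E U).card ≤ (matchNum (sel E U) ((sel E U).image (fun x => g * x)) U.1 : ℝ))
    (hshr : ∀ F U, ∀ x ∈ F, ∀ u ∈ (shr F U).1, x * u * x⁻¹ ∈ U.1) :
    ∀ (k : ℕ) (E : Finset G) (U : NbhdOne G) (g : G), g ∈ E →
      ∀ (f : G → ℝ) (ε c : ℝ), 0 ≤ ε → 0 ≤ c →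
      (∀ x y, x * y⁻¹ ∈ U.1 → |f x - f y| ≤ ε) → (∀ x y, |f x - f y| ≤ c) →
      |Mavg (chain sel shr k E U) (fun w => f (g * w))
        - Mavg (chain sel shr k E U) f| ≤ ε / θ + (1 - θ) ^ k * c := by
  intro k
  induction k with
  | zero =>
    intro E U g hg f ε c hε hc hmod hosc
    have h1 : |f (g * 1) - f 1| ≤ c := hosc _ _
    have h2 : 0 ≤ ε / θ := div_nonneg hε hθ0.le
    simp only [chain, Mavg, pow_zero, one_mul]
    linarith
  | succ k IH =>
    intro E U g hg f ε c hε hc hmod hosc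
    obtain ⟨hFne, hFm⟩ := hsel E U
    obtain ⟨D, hDF, hDcard, φ, hφinj, hφ⟩ :=
      matchNum_witness (sel E U) ((sel E U).image (fun x => g * x)) U.1
    set F := sel E U with hFdef
    set E₂ := conjSet F E with hE2
    set U₂ := shr F U with hU2
    set rest := chain sel shr k E₂ U₂ with hrest
    set Hfun : G → ℝ := fun x => Mavg rest (fun w => f (x * w)) with hHfun
    set Gfun : G → ℝ := fun x => Mavg rest (fun w => f (g * (x * w))) with hGfun
    have hMf : Mavg (chain sel shr (k+1) E U) f = (∑ x ∈ F, Hfun x) / F.card := rfl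
    have hMgf : Mavg (chain sel shr (k+1) E U) (fun w => f (g * w))
        = (∑ x ∈ F, Gfun x) / F.card := rfl
    have hθD : θ * (F.card : ℝ) ≤ (D.card : ℝ) := by
      rw [hDcard]; exact hFm g hg
    set σ : G → G := fun x => g⁻¹ * φ x with hσ
    have hσF : ∀ x ∈ D, σ x ∈ F := by
      intro x hx
      obtain ⟨z, hz, hzeq⟩ := Finset.mem_image.1 (hφ x hx).1
      have : σ x = z := by rw [hσ]; simp only; rw [← hzeq]; group
      rwa [this]
    have hσinj : Set.InjOn σ ↑D := by
      intro a ha b hb hab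
      exact hφinj ha hb (by simpa [hσ] using congrArg (fun t => g * t) hab)
    set D' := D.image σ with hD'
    have hD'F : D' ⊆ F := by
      intro y hy
      obtain ⟨x, hx, rfl⟩ := Finset.mem_image.1 hy
      exact hσF x hx
    have hD'card : D'.card = D.card := Finset.card_image_of_injOn hσinj
    have hcard_sdiff : (F \ D).card = (F \ D').card := by
      rw [Finset.card_sdiff_of_subset hDF, Finset.card_sdiff_of_subset hD'F, hD'card]
    set e := Finset.equivOfCardEq hcard_sdiff with he
    have hA : ∀ x ∈ D, |Gfun (σ x) - Hfun x| ≤ ε := by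
      intro x hx
      apply Mavg_diff_abs_le rest _ _ ε hε
      intro w
      apply hmod
      have h1 : (g * (σ x * w)) * (x * w)⁻¹ = φ x * x⁻¹ := by
        rw [hσ]; simp only; group
      rw [h1]
      exact (hφ x hx).2
    have hB : ∀ x ∈ F, ∀ y ∈ F, |Gfun y - Hfun x| ≤ ε / θ + (1 - θ) ^ k * c := by
      intro x hx y hy
      have hmem : x⁻¹ * g * y ∈ E₂ := by
        rw [hE2]
        exact Finset.mul_mem_mul (Finset.mul_mem_mul (Finset.inv_mem_inv hx) hg) hy
      have hmod2 : ∀ w w', w * w'⁻¹ ∈ U₂.1 → |f (x * w) - f (x * w')| ≤ ε := by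
        intro w w' hww
        apply hmod
        have : (x * w) * (x * w')⁻¹ = x * (w * w'⁻¹) * x⁻¹ := by group
        rw [this]
        exact hshr F U x hx _ hww
      have hIH := IH E₂ U₂ (x⁻¹ * g * y) hmem (fun w => f (x * w)) ε c hε hc hmod2
        (fun w w' => hosc _ _)
      have h1 : (fun w => (fun v => f (x * v)) ((x⁻¹ * g * y) * w)) = (fun w => f (g * (y * w))) := by
        funext w; simp only; congr 1; group
      rw [h1] at hIH
      exact hIH
    have hsplitG : ∑ x ∈ F, Gfun x = ∑ x ∈ D', Gfun x + ∑ y ∈ F \ D', Gfun y := by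
      rw [← Finset.sum_sdiff hD'F]; ring
    have hsplitH : ∑ x ∈ F, Hfun x = ∑ x ∈ D, Hfun x + ∑ y ∈ F \ D, Hfun y := by
      rw [← Finset.sum_sdiff hDF]; ring
    have himg : ∑ x ∈ D', Gfun x = ∑ x ∈ D, Gfun (σ x) :=
      Finset.sum_image (fun a ha b hb hab => hσinj ha hb hab)
    have hequiv : ∑ y ∈ F \ D', Gfun y = ∑ a : ↥(F \ D), Gfun ↑(e a) := by
      rw [← Finset.sum_coe_sort (F \ D') Gfun,
        ← Equiv.sum_comp e (fun b : ↥(F \ D') => Gfun ↑b)]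
    have hHrest : ∑ x ∈ F \ D, Hfun x = ∑ a : ↥(F \ D), Hfun ↑a :=
      (Finset.sum_coe_sort _ _).symm
    have hdiff : ∑ x ∈ F, Gfun x - ∑ x ∈ F, Hfun x
        = (∑ x ∈ D, (Gfun (σ x) - Hfun x)) + (∑ a : ↥(F \ D), (Gfun ↑(e a) - Hfun ↑a)) := by
      rw [hsplitG, hsplitH, himg, hequiv, hHrest, Finset.sum_sub_distrib,
        Finset.sum_sub_distrib]
      ring
    have hb1 : |∑ x ∈ D, (Gfun (σ x) - Hfun x)| ≤ (D.card : ℝ) * ε := by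
      calc |∑ x ∈ D, (Gfun (σ x) - Hfun x)| ≤ ∑ x ∈ D, |Gfun (σ x) - Hfun x| :=
            Finset.abs_sum_le_sum_abs _ _
        _ ≤ ∑ _x ∈ D, ε := Finset.sum_le_sum (fun x hx => hA x hx)
        _ = (D.card : ℝ) * ε := by rw [Finset.sum_const, nsmul_eq_mul]
    have hb2 : |∑ a : ↥(F \ D), (Gfun ↑(e a) - Hfun ↑a)|
        ≤ ((F \ D).card : ℝ) * (ε / θ + (1 - θ) ^ k * c) := by
      calc |∑ a : ↥(F \ D), (Gfun ↑(e a) - Hfun ↑a)|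
          ≤ ∑ a : ↥(F \ D), |Gfun ↑(e a) - Hfun ↑a| := Finset.abs_sum_le_sum_abs _ _
        _ ≤ ∑ _a : ↥(F \ D), (ε / θ + (1 - θ) ^ k * c) :=
            Finset.sum_le_sum (fun a _ => hB ↑a (Finset.mem_sdiff.1 a.2).1 ↑(e a)
              (Finset.mem_sdiff.1 (e a).2).1)
        _ = ((F \ D).card : ℝ) * (ε / θ + (1 - θ) ^ k * c) := by
            rw [Finset.sum_const, Finset.card_univ, Fintype.card_coe, nsmul_eq_mul]
    have hcards : ((F \ D).card : ℝ) = (F.card : ℝ) - (D.card : ℝ) := by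
      rw [Finset.card_sdiff_of_subset hDF, Nat.cast_sub (Finset.card_le_card hDF)]
    have hn : 0 < (F.card : ℝ) := by exact_mod_cast hFne.card_pos
    have hDle : (D.card : ℝ) ≤ (F.card : ℝ) := by
      exact_mod_cast Finset.card_le_card hDF
    have habs : |∑ x ∈ F, Gfun x - ∑ x ∈ F, Hfun x|
        ≤ (D.card : ℝ) * ε + ((F.card : ℝ) - (D.card : ℝ)) * (ε / θ + (1 - θ) ^ k * c) := by
      rw [hdiff]
      refine (abs_add_le _ _).trans ?_
      rw [← hcards]
      exact add_le_add hb1 hb2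
    rw [hMgf, hMf, div_sub_div_same, abs_div, abs_of_pos hn, div_le_iff₀ hn]
    refine habs.trans ?_
    have hp : (0:ℝ) ≤ (1 - θ) ^ k := pow_nonneg (by linarith) k
    obtain ⟨q, hq0, rfl⟩ : ∃ q, 0 ≤ q ∧ ε = θ * q :=
      ⟨ε / θ, div_nonneg hε hθ0.le, by field_simp⟩
    rw [mul_div_cancel_left₀ _ hθ0.ne', pow_succ]
    nlinarith [mul_nonneg (mul_nonneg (Nat.cast_nonneg D.card : (0:ℝ) ≤ (D.card:ℝ)) hq0)
        (by linarith : (0:ℝ) ≤ 1 - θ),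
      mul_nonneg (mul_nonneg hp hc)
        (by linarith [hθD] : (0:ℝ) ≤ (D.card:ℝ) - θ * (F.card:ℝ)),
      mul_nonneg hp hc]
end Key

/-- If for some `θ ∈ (0,1)`, every finite `E ⊆ G` and every identity neighborhood `U` admit a
finite nonempty `F ⊆ G` with `μ(F, gF, U) ≥ θ|F|` for all `g ∈ E`, then the Hausdorff
topological group `G` is amenable. -/
theorem stmt_10 (G : Type*) [Group G] [TopologicalSpace G] [IsTopologicalGroup G] [T2Space G]
    [DecidableEq G] (θ : ℝ) (hθ : θ ∈ Set.Ioo (0:ℝ) 1)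
    (h : ∀ E : Finset G, ∀ U ∈ nhds (1 : G),
      ∃ F : Finset G, F.Nonempty ∧
        ∀ g ∈ E, θ * F.card ≤ (matchNum F (F.image (fun x => g * x)) U : ℝ)) :
    TopAmenable G := by
  classical
  obtain ⟨hθ0, hθ1⟩ := hθ
  -- selection of the Følner-like sets
  set sel : Finset G → NbhdOne G → Finset G := fun E U => (h E U.1 U.2).choose with hseldef
  have hsel : ∀ E U, (sel E U).Nonempty ∧ ∀ g ∈ E,
      θ * (sel E U).card ≤ (matchNum (sel E U) ((sel E U).image (fun x => g * x)) U.1 : ℝ) :=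
    fun E U => (h E U.1 U.2).choose_spec
  -- shrinking of neighborhoods by conjugation
  have hshrex : ∀ (F : Finset G) (U : NbhdOne G),
      (⋂ x ∈ F, (fun u => x * u * x⁻¹) ⁻¹' U.1) ∈ nhds (1:G) := by
    intro F U
    rw [Filter.biInter_finset_mem]
    intro x _
    have hc : Continuous fun u : G => x * u * x⁻¹ := by continuity
    have h1 : x * (1:G) * x⁻¹ = 1 := by group
    exact hc.continuousAt.preimage_mem_nhds (by simp only [h1]; exact U.2)
  set shr : Finset G → NbhdOne G → NbhdOne G :=
    fun F U => ⟨⋂ x ∈ F, (fun u => x * u * x⁻¹) ⁻¹' U.1, hshrex F U⟩ with hshrdef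
  have hshr : ∀ F U, ∀ x ∈ F, ∀ u ∈ (shr F U).1, x * u * x⁻¹ ∈ U.1 := by
    intro F U x hx u hu
    exact Set.mem_iInter₂.1 hu x hx
  -- the index net and the ultrafilter
  set Mi : (Finset G × NbhdOne G × ℕ) → (G → ℝ) → ℝ :=
    fun i f => Mavg (chain sel shr i.2.2 i.1 i.2.1) f with hMidef
  set 𝒰 : Ultrafilter (Finset G × NbhdOne G × ℕ) :=
    Ultrafilter.of (atTop : Filter (Finset G × NbhdOne G × ℕ)) with hUdef
  have hUle : (𝒰 : Filter (Finset G × NbhdOne G × ℕ)) ≤ atTop := Ultrafilter.of_le _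
  -- existence of limits for bounded functions
  have hex : ∀ f : G → ℝ, (∃ C, ∀ x, |f x| ≤ C) →
      ∃ L, Tendsto (fun i => Mi i f) (𝒰 : Filter (Finset G × NbhdOne G × ℕ)) (nhds L) := by
    rintro f ⟨C, hC⟩
    have hC0 : 0 ≤ C := le_trans (abs_nonneg _) (hC 1)
    have hmem : ∀ i, Mi i f ∈ Set.Icc (-C) C := fun i =>
      abs_le.1 (Mavg_abs_le _ _ _ hC0 hC)
    have hle : ((𝒰.map fun i => Mi i f : Ultrafilter ℝ) : Filter ℝ)
        ≤ Filter.principal (Set.Icc (-C) C) := by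
      rw [Ultrafilter.coe_map]
      exact Filter.le_principal_iff.2 (Filter.mem_map.2 (Filter.univ_mem' hmem))
    obtain ⟨L, _, hL⟩ := (isCompact_Icc : IsCompact (Set.Icc (-C) C)).ultrafilter_le_nhds
      (𝒰.map fun i => Mi i f) hle
    refine ⟨L, ?_⟩
    rwa [Ultrafilter.coe_map] at hL
  -- the mean
  set m : (G → ℝ) → ℝ := fun f =>
    if hb : ∃ L, Tendsto (fun i => Mi i f) (𝒰 : Filter (Finset G × NbhdOne G × ℕ)) (nhds L)
    then hb.choose else 0 with hmdef
  have hm_eq : ∀ (f : G → ℝ) (L : ℝ),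
      Tendsto (fun i => Mi i f) (𝒰 : Filter (Finset G × NbhdOne G × ℕ)) (nhds L) → m f = L := by
    intro f L hL
    have hb : ∃ L, Tendsto (fun i => Mi i f) (𝒰 : Filter (Finset G × NbhdOne G × ℕ)) (nhds L) :=
      ⟨L, hL⟩
    have h1 : m f = hb.choose := by simp only [hmdef]; rw [dif_pos hb]
    rw [h1]
    exact tendsto_nhds_unique hb.choose_spec hL
  have hm_tendsto : ∀ f : G → ℝ, (∃ C, ∀ x, |f x| ≤ C) →
      Tendsto (fun i => Mi i f) (𝒰 : Filter (Finset G × NbhdOne G × ℕ)) (nhds (m f)) := by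
    intro f hb
    obtain ⟨L, hL⟩ := hex f hb
    rw [hm_eq f L hL]
    exact hL
  have hchain_ne : ∀ (k : ℕ) (E : Finset G) (U : NbhdOne G),
      ∀ F ∈ chain sel shr k E U, F.Nonempty :=
    chain_nonempty sel shr (fun E U => (hsel E U).1)
  refine ⟨m, ⟨?_, ?_, ?_, ?_⟩, ?_⟩
  · -- normalization
    have h1 : ∀ i, Mi i (fun _ => (1:ℝ)) = 1 := fun i =>
      Mavg_const _ (hchain_ne _ _ _) 1
    exact hm_eq _ 1 (by simpa [h1] using
      (tendsto_const_nhds : Tendsto (fun _ : Finset G × NbhdOne G × ℕ => (1:ℝ)) _ (nhds 1)))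
  · -- additivity
    intro f hf f' hf'
    have tf := hm_tendsto f hf.1
    have tf' := hm_tendsto f' hf'.1
    refine hm_eq _ (m f + m f') ?_
    have := tf.add tf'
    refine this.congr fun i => ?_
    exact (Mavg_add _ _ _).symm
  · -- homogeneity
    intro c f hf
    have tf := hm_tendsto f hf.1
    refine hm_eq _ (c * m f) ?_
    have := tf.const_mul c
    refine this.congr fun i => ?_
    exact (Mavg_smul _ _ _).symm
  · -- positivity
    intro f hf hfpos
    exact ge_of_tendsto' (hm_tendsto f hf.1) (fun i => Mavg_nonneg _ _ hfpos)
  · -- left invariance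
    intro f hf g
    obtain ⟨C, hC⟩ := hf.1
    have hC0 : 0 ≤ C := le_trans (abs_nonneg _) (hC 1)
    have hosc : ∀ x y, |f x - f y| ≤ 2 * C := by
      intro x y
      have h1 := abs_add_le (f x) (-(f y))
      rw [← sub_eq_add_neg, abs_neg] at h1
      linarith [hC x, hC y]
    have hinv0 : Tendsto (fun i => Mi i (fun x => f (g * x)) - Mi i f)
        (atTop : Filter (Finset G × NbhdOne G × ℕ)) (nhds 0) := by
      rw [Metric.tendsto_nhds]
      intro δ hδ
      simp only [Real.dist_eq, sub_zero]
      obtain ⟨U₀, hU₀, hmodf⟩ := hf.2 (θ * δ / 4) (by positivity)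
      obtain ⟨k₀, hk₀⟩ := exists_pow_lt_of_lt_one
        (show (0:ℝ) < δ / (2 * (2*C+1)) by positivity) (show (1:ℝ) - θ < 1 by linarith)
      have hk₀' : (1-θ)^k₀ * (2*C) < δ/2 := by
        have hpos : (0:ℝ) < 2*C+1 := by linarith
        have h1 : (1-θ)^k₀ * (2*C+1) < δ / (2*(2*C+1)) * (2*C+1) :=
          mul_lt_mul_of_pos_right hk₀ hpos
        have h2 : δ / (2*(2*C+1)) * (2*C+1) = δ/2 := by field_simp
        nlinarith [pow_nonneg (show (0:ℝ) ≤ 1-θ by linarith) k₀]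
      rw [Filter.eventually_atTop]
      refine ⟨({g}, ⟨U₀, hU₀⟩, k₀), ?_⟩
      rintro ⟨E, V, k⟩ hle
      have hgE : g ∈ E := hle.1 (Finset.mem_singleton_self g)
      have hVU : V.1 ⊆ U₀ := hle.2.1
      have hkk : k₀ ≤ k := hle.2.2
      have hkey := key θ hθ0 hθ1 sel shr hsel hshr k E V g hgE f (θ*δ/4) (2*C)
        (by positivity) (by linarith)
        (fun x y hxy => hmodf x y (hVU hxy)) hosc
      have e1 : (θ*δ/4)/θ = δ/4 := by field_simp
      have e2 : (1-θ)^k * (2*C) ≤ (1-θ)^k₀ * (2*C) :=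
        mul_le_mul_of_nonneg_right
          (pow_le_pow_of_le_one (by linarith) (by linarith) hkk) (by linarith)
      calc |Mi (E, V, k) (fun x => f (g * x)) - Mi (E, V, k) f|
          ≤ (θ*δ/4)/θ + (1-θ)^k * (2*C) := hkey
        _ < δ := by rw [e1]; linarith
    have t1 := hm_tendsto f ⟨C, hC⟩
    have t0 : Tendsto (fun i => Mi i (fun x => f (g * x)) - Mi i f)
        (𝒰 : Filter (Finset G × NbhdOne G × ℕ)) (nhds 0) := hinv0.mono_left hUle
    have t2 : Tendsto (fun i => Mi i (fun x => f (g * x)))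
        (𝒰 : Filter (Finset G × NbhdOne G × ℕ)) (nhds (m f)) := by
      have := t0.add t1
      simpa using this
    exact hm_eq _ _ t2
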